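/- Fix ε ∈ (0, 1/2) and δ > 0, and let (ℓₙ, uₙ) be a sequence with g_ε(ℓₙ, uₙ) = δ for all n and ℓₙ ↓ −∞. Suppose additionally uₙ is bounded below by Φ^{−1}(1−ε) and bounded above. Then uₙ → u*, where u* is the unique solution of ḡ(u) = δ with ḡ(u) = ∫₀^∞ max{Φ(u − t) − (1 − ε), 0} dt. -/

import Mathlib

open MeasureTheory Set

/-- The standard Gaussian cumulative distribution function. -/
noncomputable def Phi (x : ℝ) : ℝ :=
  (∫ s in Set.Iic x, Real.exp (-s ^ 2 / 2)) / Real.sqrt (2 * Real.pi)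

/-- `g ε ℓ u = ∫₀^∞ max{Φ(u − t) − Φ(ℓ + t) − (1 − ε), 0} dt`. -/
noncomputable def g (ε ℓ u : ℝ) : ℝ :=
  ∫ t in Set.Ioi (0:ℝ), max (Phi (u - t) - Phi (ℓ + t) - (1 - ε)) 0

noncomputable def gbar (ε u : ℝ) : ℝ :=
  ∫ t in Set.Ioi (0:ℝ), max (Phi (u - t) - (1 - ε)) 0

open Filter


lemma gauss_integrable : Integrable (fun s : ℝ => Real.exp (-s ^ 2 / 2)) := by
  have h := integrable_exp_neg_mul_sq (by norm_num : (0:ℝ) < 1/2)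
  convert h using 2 with s
  ring_nf

lemma sqrt2pi_pos : 0 < Real.sqrt (2 * Real.pi) :=
  Real.sqrt_pos.2 (by positivity)

lemma Phi_nonneg (x : ℝ) : 0 ≤ Phi x :=
  div_nonneg (setIntegral_nonneg measurableSet_Iic fun s _ => (Real.exp_pos _).le)
    (Real.sqrt_nonneg _)

lemma Phi_mono : Monotone Phi := by
  intro x y hxy
  unfold Phi
  gcongr ?_ / _
  exact setIntegral_mono_set gauss_integrable.integrableOn
      (Filter.Eventually.of_forall fun s => (Real.exp_pos _).le)
      ((Iic_subset_Iic.2 hxy).eventuallyLE)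

lemma Phi_measurable : Measurable Phi := Phi_mono.measurable

lemma Phi_strictMono : StrictMono Phi := by
  intro x y hxy
  have hsplit : ∫ s in Set.Iic y, Real.exp (-s ^ 2 / 2)
      = (∫ s in Set.Iic x, Real.exp (-s ^ 2 / 2)) + ∫ s in Set.Ioc x y, Real.exp (-s ^ 2 / 2) := by
    rw [← setIntegral_union (Set.Iic_disjoint_Ioc le_rfl) measurableSet_Ioc
      gauss_integrable.integrableOn gauss_integrable.integrableOn,
      Set.Iic_union_Ioc_eq_Iic hxy.le]
  have hpos : 0 < ∫ s in Set.Ioc x y, Real.exp (-s ^ 2 / 2) := by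
    rw [setIntegral_pos_iff_support_of_nonneg_ae
      (Filter.Eventually.of_forall fun s => (Real.exp_pos _).le) gauss_integrable.integrableOn]
    have : Function.support (fun s : ℝ => Real.exp (-s ^ 2 / 2)) = Set.univ := by
      ext s; simp [Function.mem_support, (Real.exp_pos _).ne']
    rw [this, Set.univ_inter, Real.volume_Ioc]
    simpa using sub_pos.2 hxy
  unfold Phi
  rw [hsplit]
  have := sqrt2pi_pos
  rw [div_lt_div_iff_of_pos_right this]  -- guess name
  linarith


lemma Phi_tendsto_atBot : Tendsto Phi atBot (nhds 0) := by
  have h0 : Tendsto (fun x => ∫ s in Set.Iic x, Real.exp (-s ^ 2 / 2)) atBot (nhds 0) := by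
    simp_rw [← integral_indicator measurableSet_Iic]
    rw [show (0:ℝ) = ∫ _ : ℝ, (0:ℝ) from (integral_zero _ _).symm]
    apply tendsto_integral_filter_of_dominated_convergence
      (fun s : ℝ => Real.exp (-s ^ 2 / 2))
    · exact Filter.Eventually.of_forall fun x =>
        (gauss_integrable.aestronglyMeasurable.indicator measurableSet_Iic)
    · exact Filter.Eventually.of_forall fun x => Filter.Eventually.of_forall fun s => by
        rw [Real.norm_eq_abs, abs_of_nonneg (Set.indicator_nonneg (fun _ _ => (Real.exp_pos _).le) _)]
        exact Set.indicator_le_self' (fun _ _ => (Real.exp_pos _).le) s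
    · exact gauss_integrable
    · refine Filter.Eventually.of_forall fun s => ?_
      have hev : ∀ᶠ x in atBot, Set.indicator (Set.Iic x)
          (fun s : ℝ => Real.exp (-s ^ 2 / 2)) s = 0 := by
        filter_upwards [eventually_lt_atBot s] with x hx
        exact Set.indicator_of_notMem (by simpa using hx.not_ge) _
      have hlim : (0:ℝ) = 0 := rfl
      exact Filter.Tendsto.congr' (by filter_upwards [hev] with x hx; exact hx.symm)
        tendsto_const_nhds
  have := h0.div_const (Real.sqrt (2 * Real.pi))
  unfold Phi
  simpa only [zero_div] using this


section aux
variable {ε q u : ℝ}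

/-- pointwise bound for the gbar-integrand on `Ioi 0`. -/
lemma bound_aux (hq : Phi q = 1 - ε) (hε1 : ε ≤ 1) {t : ℝ} (ht : 0 < t) :
    max (Phi (u - t) - (1 - ε)) 0
      ≤ Set.indicator (Set.Ioc 0 (u - q)) (fun _ => Phi u) t := by
  rcases le_or_gt t (u - q) with h | h
  · rw [Set.indicator_of_mem (Set.mem_Ioc.2 ⟨ht, h⟩)]
    refine max_le ?_ (Phi_nonneg u)
    have : Phi (u - t) ≤ Phi u := Phi_mono (by linarith)
    linarith
  · rw [Set.indicator_of_notMem (fun hm => absurd hm.2 (not_le.2 h))]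
    have : Phi (u - t) ≤ 1 - ε := hq ▸ Phi_mono (by linarith)
    rw [max_eq_right (by linarith)]

lemma bound_integrable (q u : ℝ) : IntegrableOn
    (Set.indicator (Set.Ioc 0 (u - q)) (fun _ => Phi u)) (Set.Ioi 0) := by
  refine Integrable.integrableOn ?_
  rw [integrable_indicator_iff measurableSet_Ioc]
  exact integrableOn_const measure_Ioc_lt_top.ne

lemma meas_gbar_integrand : Measurable (fun t => max (Phi (u - t) - (1 - ε)) 0) :=
  ((Phi_measurable.comp (measurable_const.sub measurable_id)).sub measurable_const).max
    measurable_const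

lemma meas_g_integrand {ℓ : ℝ} :
    Measurable (fun t => max (Phi (u - t) - Phi (ℓ + t) - (1 - ε)) 0) :=
  (((Phi_measurable.comp (measurable_const.sub measurable_id)).sub
    (Phi_measurable.comp (measurable_const.add measurable_id))).sub measurable_const).max
    measurable_const

lemma g_integrand_le {ℓ t : ℝ} :
    max (Phi (u - t) - Phi (ℓ + t) - (1 - ε)) 0 ≤ max (Phi (u - t) - (1 - ε)) 0 :=
  max_le_max (by have := Phi_nonneg (ℓ + t); linarith) le_rfl

lemma integrable_gbar_integrand (hq : Phi q = 1 - ε) (hε1 : ε ≤ 1) :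
    IntegrableOn (fun t => max (Phi (u - t) - (1 - ε)) 0) (Set.Ioi 0) := by
  refine Integrable.mono' (bound_integrable q u)
    meas_gbar_integrand.aestronglyMeasurable ?_
  refine (ae_restrict_iff' measurableSet_Ioi).2 (Filter.Eventually.of_forall fun t ht => ?_)
  rw [Real.norm_eq_abs, abs_of_nonneg (le_max_right _ _)]
  exact bound_aux hq hε1 ht

lemma integrable_g_integrand (hq : Phi q = 1 - ε) (hε1 : ε ≤ 1) {ℓ : ℝ} :
    IntegrableOn (fun t => max (Phi (u - t) - Phi (ℓ + t) - (1 - ε)) 0) (Set.Ioi 0) := by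
  refine Integrable.mono' (bound_integrable q u)
    meas_g_integrand.aestronglyMeasurable ?_
  refine (ae_restrict_iff' measurableSet_Ioi).2 (Filter.Eventually.of_forall fun t ht => ?_)
  rw [Real.norm_eq_abs, abs_of_nonneg (le_max_right _ _)]
  exact le_trans g_integrand_le (bound_aux hq hε1 ht)

lemma g_le_gbar (hq : Phi q = 1 - ε) (hε1 : ε ≤ 1) (ℓ : ℝ) : g ε ℓ u ≤ gbar ε u :=
  setIntegral_mono (integrable_g_integrand hq hε1) (integrable_gbar_integrand hq hε1)
    fun _ => g_integrand_le

lemma g_mono_u (hq : Phi q = 1 - ε) (hε1 : ε ≤ 1) (ℓ : ℝ) {a b : ℝ} (hab : a ≤ b) :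
    g ε ℓ a ≤ g ε ℓ b :=
  setIntegral_mono (integrable_g_integrand (u := a) hq hε1)
    (integrable_g_integrand (u := b) hq hε1)
    fun t => max_le_max (by have := Phi_mono (sub_le_sub_right hab t); linarith) le_rfl

lemma gbar_strictMonoOn (hq : Phi q = 1 - ε) (hε1 : ε ≤ 1) {a b : ℝ}
    (ha : q ≤ a) (hab : a < b) : gbar ε a < gbar ε b := by
  have hia := integrable_gbar_integrand (u := a) hq hε1
  have hib := integrable_gbar_integrand (u := b) hq hε1
  have hle : ∀ t : ℝ, max (Phi (a - t) - (1 - ε)) 0 ≤ max (Phi (b - t) - (1 - ε)) 0 :=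
    fun t => max_le_max (by have := Phi_mono (by linarith : a - t ≤ b - t); linarith) le_rfl
  have hkey : 0 < ∫ t in Set.Ioi (0:ℝ),
      (max (Phi (b - t) - (1 - ε)) 0 - max (Phi (a - t) - (1 - ε)) 0) := by
    rw [setIntegral_pos_iff_support_of_nonneg_ae
      (Filter.Eventually.of_forall fun t => sub_nonneg.2 (hle t)) (hib.sub hia)]
    refine lt_of_lt_of_le ?_ (measure_mono (?_ : Set.Ioo (a - q) (b - q) ⊆ _))
    · rw [Real.volume_Ioo]; simpa using hab
    · intro t ht
      have ht0 : 0 < t := lt_of_le_of_lt (by linarith) ht.1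
      have hfa : max (Phi (a - t) - (1 - ε)) 0 = 0 := by
        have : Phi (a - t) ≤ 1 - ε := hq ▸ Phi_mono (by linarith [ht.1])
        exact max_eq_right (by linarith)
      have hfb : 0 < Phi (b - t) - (1 - ε) := by
        have : Phi q < Phi (b - t) := Phi_strictMono (by linarith [ht.2])
        rw [hq] at this; linarith
      constructor
      · simp only [Function.mem_support, hfa]
        have : 0 < max (Phi (b - t) - (1 - ε)) 0 := lt_max_of_lt_left hfb
        intro h; rw [sub_zero] at h; exact this.ne' h
      · exact ht0
  have := integral_sub hib hia
  unfold gbar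
  rw [this] at hkey
  linarith

lemma g_tendsto_gbar (hq : Phi q = 1 - ε) (hε1 : ε ≤ 1) {ℓ : ℕ → ℝ}
    (hℓbot : Tendsto ℓ atTop atBot) (u' : ℝ) :
    Tendsto (fun n => g ε (ℓ n) u') atTop (nhds (gbar ε u')) := by
  unfold g gbar
  apply tendsto_integral_of_dominated_convergence
    (Set.indicator (Set.Ioc 0 (u' - q)) (fun _ => Phi u'))
  · exact fun n => meas_g_integrand.aestronglyMeasurable
  · exact bound_integrable q u'
  · intro n
    refine (ae_restrict_iff' measurableSet_Ioi).2 (Filter.Eventually.of_forall fun t ht => ?_)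
    rw [Real.norm_eq_abs, abs_of_nonneg (le_max_right _ _)]
    exact le_trans g_integrand_le (bound_aux hq hε1 ht)
  · refine Filter.Eventually.of_forall fun t => ?_
    have hℓt : Tendsto (fun n => ℓ n + t) atTop atBot :=
      tendsto_atBot_add_const_right _ t hℓbot
    have h1 : Tendsto (fun n => Phi (ℓ n + t)) atTop (nhds 0) :=
      Phi_tendsto_atBot.comp hℓt
    have h2 : Tendsto (fun n => max (Phi (u' - t) - Phi (ℓ n + t) - (1 - ε)) 0) atTop
        (nhds (max (Phi (u' - t) - 0 - (1 - ε)) 0)) :=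
      (((tendsto_const_nhds (x := Phi (u' - t))).sub h1).sub
        (tendsto_const_nhds (x := (1 - ε)))).max tendsto_const_nhds
    simpa using h2
end aux


theorem stmt_12 (ε δ : ℝ) (hε : ε ∈ Set.Ioo (0:ℝ) (1/2)) (hδ : 0 < δ)
    (q : ℝ) (hq : Phi q = 1 - ε)
    (ℓ u : ℕ → ℝ) (hcurve : ∀ n, g ε (ℓ n) (u n) = δ)
    (hℓanti : Antitone ℓ) (hℓbot : Filter.Tendsto ℓ Filter.atTop Filter.atBot)
    (hlb : ∀ n, q ≤ u n) (hub : ∃ C : ℝ, ∀ n, u n ≤ C)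
    (ustar : ℝ) (hustar : q < ustar ∧ gbar ε ustar = δ) :
    Filter.Tendsto u Filter.atTop (nhds ustar) := by
  obtain ⟨hq_lt, hgb⟩ := hustar
  have hε1 : ε ≤ 1 := by linarith [hε.2]
  have hlow : ∀ n, ustar ≤ u n := by
    intro n
    by_contra h
    push_neg at h
    have h1 : g ε (ℓ n) (u n) ≤ gbar ε (u n) := g_le_gbar hq hε1 _
    have h2 : gbar ε (u n) < gbar ε ustar := gbar_strictMonoOn hq hε1 (hlb n) h
    rw [hcurve n] at h1; rw [hgb] at h2; linarith
  refine tendsto_order.2 ⟨fun l hl => Filter.Eventually.of_forall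
    (fun n => lt_of_lt_of_le hl (hlow n)), fun u' hu' => ?_⟩
  have h3 : δ < gbar ε u' := by
    have := gbar_strictMonoOn hq hε1 hq_lt.le hu'
    rwa [hgb] at this
  have h4 := (g_tendsto_gbar hq hε1 hℓbot u').eventually (eventually_gt_nhds h3)
  filter_upwards [h4] with n hn
  by_contra h
  push_neg at h
  have hmono := g_mono_u hq hε1 (ℓ n) h
  rw [hcurve n] at hmono
  exact absurd (lt_of_lt_of_le hn hmono) (lt_irrefl δ)
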